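/- Let R be a commutative ring with nilradical J and R̄ = R/J. If M̄ is an invertible alternating 2n×2n matrix over R̄ with determinant 1 (Pfaffian a unit), then there exists an invertible alternating 2n×2n matrix M over R reducing to M̄ modulo J. -/

import Mathlib

open Matrix

/-- Lifting invertible alternating matrices with determinant one along the reduction
modulo the nilradical: if `M̄` is an invertible alternating `2n × 2n` matrix with
determinant `1` over `R ⧸ nilradical R`, then there is an invertible alternating
`2n × 2n` matrix over `R` reducing to `M̄`. -/
theorem lift_alternating_matrix_mod_nilradical {R : Type*} [CommRing R] (n : ℕ)
    (M' : Matrix (Fin (2 * n)) (Fin (2 * n)) (R ⧸ nilradical R))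
    (halt : M'ᵀ = -M') (hdiag : ∀ i, M' i i = 0) (hdet : M'.det = 1) :
    ∃ M : Matrix (Fin (2 * n)) (Fin (2 * n)) R,
      Mᵀ = -M ∧ (∀ i, M i i = 0) ∧ IsUnit M.det ∧
      M.map (Ideal.Quotient.mk (nilradical R)) = M' := by
  have hsurj := Ideal.Quotient.mk_surjective (I := nilradical R)
  set l : R ⧸ nilradical R → R := Function.surjInv hsurj with hl
  have hlift : ∀ x, Ideal.Quotient.mk (nilradical R) (l x) = x :=
    Function.surjInv_eq hsurj
  have hskew : ∀ i j, -M' j i = M' i j := by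
    intro i j
    have := congrFun (congrFun halt i) j
    simp only [transpose_apply, Matrix.neg_apply] at this
    rw [this, neg_neg]
  refine ⟨fun i j => if i = j then 0 else if i < j then l (M' i j) else -l (M' j i),
    ?_, ?_, ?_, ?_⟩
  · ext i j
    erw [transpose_apply, Matrix.neg_apply]
    rcases lt_trichotomy i j with h | h | h
    · rw [if_neg (ne_of_gt h), if_neg (not_lt_of_gt h), if_neg (ne_of_lt h), if_pos h]
    · subst h; simp
    · rw [if_neg (ne_of_lt h), if_pos h, if_neg (ne_of_gt h), if_neg (not_lt_of_gt h), neg_neg]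
  · intro i; simp
  · -- determinant is 1 + nilpotent
    set M : Matrix (Fin (2 * n)) (Fin (2 * n)) R :=
      fun i j => if i = j then 0 else if i < j then l (M' i j) else -l (M' j i) with hM
    have hmap : M.map (Ideal.Quotient.mk (nilradical R)) = M' := by
      ext i j
      simp only [hM]
      erw [Matrix.map_apply]
      rcases lt_trichotomy i j with h | h | h
      · rw [if_neg (ne_of_lt h), if_pos h, hlift]
      · subst h; simp [hdiag]
      · rw [if_neg (ne_of_gt h), if_neg (not_lt_of_gt h), map_neg, hlift, hskew]
    have hd : Ideal.Quotient.mk (nilradical R) M.det = 1 := by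
      rw [RingHom.map_det, RingHom.mapMatrix_apply, hmap, hdet]
    have hnil : IsNilpotent (M.det - 1) := by
      rw [← mem_nilradical, ← Ideal.Quotient.eq_zero_iff_mem]
      simp [hd]
    have : M.det = 1 + (M.det - 1) := by ring
    rw [this]
    exact hnil.isUnit_add_left_of_commute isUnit_one (Commute.all _ _)
  · ext i j
    erw [Matrix.map_apply]
    rcases lt_trichotomy i j with h | h | h
    · rw [if_neg (ne_of_lt h), if_pos h, hlift]
    · subst h; simp [hdiag]
    · rw [if_neg (ne_of_gt h), if_neg (not_lt_of_gt h), map_neg, hlift, hskew]
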